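/- Let I = (𝔼, D, c, f) be a CMP instance whose objective f is of type sum or of type bottleneck, and let E = {e_1,…,e_k} ⊆ 𝔼. Then u_b'(I,E) = min_{l=1,…,k} u'(I,e_l). -/

import Mathlib

open scoped ENNReal BigOperators

/-- Objective type of a combinatorial minimization problem:
sum, product, or bottleneck. -/
inductive ObjType where
  | sum : ObjType
  | prod : ObjType
  | bottleneck : ObjType
deriving DecidableEq

/-- The cost `f_c(S)` of a feasible solution `S` under cost function `c`:
the sum, the product, or the maximum (for nonempty `S`) of the element costs. -/
noncomputable def objCost {ι : Type*} (t : ObjType) (c : ι → ℝ) (S : Finset ι) : ℝ :=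
  match t with
  | ObjType.sum => ∑ e ∈ S, c e
  | ObjType.prod => ∏ e ∈ S, c e
  | ObjType.bottleneck => if h : S.Nonempty then S.sup' h c else 0

/-- The optimal objective value `f(I)` of the instance with feasible set `D`. -/
noncomputable def optVal {ι : Type*} (t : ObjType) (c : ι → ℝ) (D : Finset (Finset ι)) : ℝ :=
  if h : D.Nonempty then D.inf' h (objCost t c) else 0

/-- `S` is an optimal solution of the instance `(𝔼, D, c, f)`. -/
def isOpt {ι : Type*} (t : ObjType) (c : ι → ℝ) (D : Finset (Finset ι)) (S : Finset ι) : Prop :=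
  S ∈ D ∧ objCost t c S = optVal t c D

/-- `0 ≤ a < maxdec(e)`, where `maxdec(e) = ∞` for sum/bottleneck objectives and
`maxdec(e) = c(e)` for the product objective. -/
def decOK {ι : Type*} (t : ObjType) (c : ι → ℝ) (e : ι) (a : ℝ) : Prop :=
  0 ≤ a ∧ (t = ObjType.prod → a < c e)

/-- Extended single upper tolerance
`u'(I,e) = sup {α ≥ 0 : every optimal solution of I is optimal for I_{α,e}}` valued in `[0,∞]`. -/
noncomputable def uTol {ι : Type*} [DecidableEq ι] (t : ObjType) (c : ι → ℝ)
    (D : Finset (Finset ι)) (e : ι) : ℝ≥0∞ :=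
  sSup (ENNReal.ofReal '' {a : ℝ | 0 ≤ a ∧
    ∀ S : Finset ι, isOpt t c D S →
      isOpt t (fun x => if x = e then c x + a else c x) D S})

/-- Extended regular set upper tolerance `u'(I,E)`, valued in `[0,∞]`. -/
noncomputable def uTolSet {ι : Type*} [DecidableEq ι] (t : ObjType) (c : ι → ℝ)
    (D : Finset (Finset ι)) (E : Finset ι) : ℝ≥0∞ :=
  sSup (ENNReal.ofReal '' {a : ℝ |
    ∀ S : Finset ι, isOpt t c D S →
      ∃ α : ι → ℝ, (∀ x, 0 ≤ α x) ∧ (∀ x ∉ E, α x = 0) ∧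
        a = ∑ x ∈ E, α x ∧ isOpt t (fun x => c x + α x) D S})

/-- Extended reverse set upper tolerance `u_b'(I,E)`, valued in `[0,∞]` (`inf ∅ = ∞`). -/
noncomputable def uTolSetRev {ι : Type*} [DecidableEq ι] (t : ObjType) (c : ι → ℝ)
    (D : Finset (Finset ι)) (E : Finset ι) : ℝ≥0∞ :=
  sInf (ENNReal.ofReal '' {a : ℝ |
    ∃ S : Finset ι, isOpt t c D S ∧
      ∃ α : ι → ℝ, (∀ x, 0 ≤ α x) ∧ (∀ x ∉ E, α x = 0) ∧
        a = ∑ x ∈ E, α x ∧ ¬ isOpt t (fun x => c x + α x) D S})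

/-- New single lower tolerance
`l'(I,e) = sup {α : 0 ≤ α < maxdec(e), f(I_{−α,e}) = f(I)}`, valued in `[0,∞]`. -/
noncomputable def lTol {ι : Type*} [DecidableEq ι] (t : ObjType) (c : ι → ℝ)
    (D : Finset (Finset ι)) (e : ι) : ℝ≥0∞ :=
  sSup (ENNReal.ofReal '' {a : ℝ | decOK t c e a ∧
    optVal t (fun x => if x = e then c x - a else c x) D = optVal t c D})

/-- New regular set lower tolerance `l'(I,E)`, valued in `[0,∞]`. -/
noncomputable def lTolSet {ι : Type*} [DecidableEq ι] (t : ObjType) (c : ι → ℝ)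
    (D : Finset (Finset ι)) (E : Finset ι) : ℝ≥0∞ :=
  sSup (ENNReal.ofReal '' {a : ℝ |
    ∃ α : ι → ℝ, (∀ x ∈ E, decOK t c x (α x)) ∧ (∀ x ∉ E, α x = 0) ∧
      a = ∑ x ∈ E, α x ∧ optVal t (fun x => c x - α x) D = optVal t c D})

/-- New reverse set lower tolerance `l_b'(I,E)`, valued in `[0,∞]` (`inf ∅ = ∞`). -/
noncomputable def lTolSetRev {ι : Type*} [DecidableEq ι] (t : ObjType) (c : ι → ℝ)
    (D : Finset (Finset ι)) (E : Finset ι) : ℝ≥0∞ :=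
  sInf (ENNReal.ofReal '' {a : ℝ |
    ∃ α : ι → ℝ, (∀ x ∈ E, decOK t c x (α x)) ∧ (∀ x ∉ E, α x = 0) ∧
      a = ∑ x ∈ E, α x ∧ optVal t (fun x => c x - α x) D < optVal t c D})


lemma optVal_le' {ι : Type*} (t : ObjType) (c : ι → ℝ) (D : Finset (Finset ι))
    {S : Finset ι} (hS : S ∈ D) : optVal t c D ≤ objCost t c S := by
  rw [optVal, dif_pos ⟨S, hS⟩]
  exact Finset.inf'_le _ hS

lemma exists_lt_of_not_opt' {ι : Type*} (t : ObjType) (c : ι → ℝ) (D : Finset (Finset ι))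
    {S : Finset ι} (hS : S ∈ D) (h : ¬ isOpt t c D S) :
    ∃ T ∈ D, objCost t c T < objCost t c S := by
  have hD : D.Nonempty := ⟨S, hS⟩
  obtain ⟨T, hT, hTe⟩ := Finset.exists_mem_eq_inf' hD (objCost t c)
  refine ⟨T, hT, ?_⟩
  have h1 : optVal t c D ≤ objCost t c S := optVal_le' t c D hS
  have h2 : objCost t c T = optVal t c D := by rw [optVal, dif_pos hD, ← hTe]
  have h3 : objCost t c S ≠ optVal t c D := fun he => h ⟨hS, he⟩
  rw [h2]
  exact lt_of_le_of_ne h1 (Ne.symm h3)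

lemma not_opt_of_lt' {ι : Type*} (t : ObjType) (c : ι → ℝ) (D : Finset (Finset ι))
    {S T : Finset ι} (hS : S ∈ D) (hT : T ∈ D)
    (h : objCost t c T < objCost t c S) : ¬ isOpt t c D S := by
  rintro ⟨_, heq⟩
  have h1 := optVal_le' t c D hT
  rw [← heq] at h1
  linarith

lemma urv_main {ι : Type*} [DecidableEq ι] {t : ObjType} (c : ι → ℝ) (D : Finset (Finset ι))
    (hSne : ∀ S ∈ D, S.Nonempty) (ht : t = ObjType.sum ∨ t = ObjType.bottleneck)
    (E : Finset ι) {S : Finset ι} {α : ι → ℝ} {a : ℝ}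
    (hSopt : isOpt t c D S)
    (hα0 : ∀ x, 0 ≤ α x) (hsupp : ∀ x ∉ E, α x = 0) (ha : a = ∑ x ∈ E, α x)
    (hnot : ¬ isOpt t (fun x => c x + α x) D S) :
    ∃ e ∈ E, ∀ b, a ≤ b → ¬ isOpt t (fun x => if x = e then c x + b else c x) D S := by
  obtain ⟨hS, hSval⟩ := hSopt
  obtain ⟨T, hT, hlt⟩ := exists_lt_of_not_opt' t (fun x => c x + α x) D hS hnot
  have hST : objCost t c S ≤ objCost t c T := by
    rw [hSval]; exact optVal_le' t c D hT
  rcases ht with ht | ht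
  · -- sum case
    subst ht
    simp only [objCost] at hlt hST
    rw [Finset.sum_add_distrib, Finset.sum_add_distrib] at hlt
    -- ∑_{S\T} α > 0
    have hTnn : (0:ℝ) ≤ ∑ x ∈ T, α x := Finset.sum_nonneg fun x _ => hα0 x
    have hsplit : ∑ i ∈ S ∩ T, α i + ∑ i ∈ S \ T, α i = ∑ i ∈ S, α i :=
      Finset.sum_inter_add_sum_sdiff S T α
    have hint : ∑ i ∈ S ∩ T, α i ≤ ∑ i ∈ T, α i :=
      Finset.sum_le_sum_of_subset_of_nonneg Finset.inter_subset_right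
        (fun x _ _ => hα0 x)
    have hpos : (0:ℝ) < ∑ i ∈ S \ T, α i := by linarith
    have hex : ∃ e ∈ S \ T, (0:ℝ) < α e := by
      by_contra hc
      push_neg at hc
      have : ∑ i ∈ S \ T, α i = 0 :=
        Finset.sum_eq_zero fun x hx => le_antisymm (hc x hx) (hα0 x)
      linarith
    obtain ⟨e, heST, heα⟩ := hex
    obtain ⟨heS, heT⟩ := Finset.mem_sdiff.1 heST
    have heE : e ∈ E := by
      by_contra hc
      rw [hsupp e hc] at heα
      linarith
    have hSa : ∑ x ∈ S, α x ≤ a := by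
      rw [ha, ← Finset.sum_inter_add_sum_sdiff S E α]
      have h1 : ∑ x ∈ S \ E, α x = 0 :=
        Finset.sum_eq_zero fun x hx => hsupp x (Finset.mem_sdiff.1 hx).2
      rw [h1, add_zero]
      exact Finset.sum_le_sum_of_subset_of_nonneg Finset.inter_subset_right
        (fun x _ _ => hα0 x)
    refine ⟨e, heE, fun b hb => ?_⟩
    refine not_opt_of_lt' _ _ _ hS hT ?_
    simp only [objCost]
    have hTc : ∑ x ∈ T, (if x = e then c x + b else c x) = ∑ x ∈ T, c x :=
      Finset.sum_congr rfl fun x hx => by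
        rw [if_neg]; rintro rfl; exact heT hx
    have hSc : ∑ x ∈ S, (if x = e then c x + b else c x) = (∑ x ∈ S, c x) + b := by
      have : ∀ x ∈ S, (if x = e then c x + b else c x)
          = c x + (if x = e then b else 0) := by
        intro x _; split_ifs <;> simp
      rw [Finset.sum_congr rfl this, Finset.sum_add_distrib,
        Finset.sum_ite_eq' S e (fun _ => b), if_pos heS]
    rw [hTc, hSc]
    linarith
  · -- bottleneck case
    subst ht
    have hS' := hSne S hS
    have hT' := hSne T hT
    simp only [objCost, dif_pos hS', dif_pos hT'] at hlt hST
    obtain ⟨e, heS, hee⟩ := Finset.exists_mem_eq_sup' hS' (fun x => c x + α x)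
    have hTα : T.sup' hT' c ≤ T.sup' hT' (fun x => c x + α x) :=
      Finset.sup'_mono_fun fun x _ => by linarith [hα0 x]
    have hce : c e ≤ S.sup' hS' c := Finset.le_sup' c heS
    have hkey : T.sup' hT' c < c e + α e := by
      rw [← hee]; exact lt_of_le_of_lt hTα hlt
    have hαe : 0 < α e := by linarith
    have heE : e ∈ E := by
      by_contra hc
      rw [hsupp e hc] at hαe
      linarith
    have heT : e ∉ T := by
      intro hc
      have : c e + α e ≤ T.sup' hT' (fun x => c x + α x) :=
        Finset.le_sup' (fun x => c x + α x) hc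
      rw [hee] at hlt
      linarith [hTα]
    have hαa : α e ≤ a := by
      rw [ha]
      exact Finset.single_le_sum (fun x _ => hα0 x) heE
    refine ⟨e, heE, fun b hb => ?_⟩
    refine not_opt_of_lt' _ _ _ hS hT ?_
    simp only [objCost, dif_pos hS', dif_pos hT']
    have hTc : T.sup' hT' (fun x => if x = e then c x + b else c x) = T.sup' hT' c :=
      Finset.sup'_congr hT' rfl fun x hx => by
        rw [if_neg]; rintro rfl; exact heT hx
    have hSc : c e + b ≤ S.sup' hS' (fun x => if x = e then c x + b else c x) := by
      have := Finset.le_sup' (fun x => if x = e then c x + b else c x) heS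
      rw [if_pos rfl] at this; exact this
    rw [hTc]
    linarith

/-- Theorem (reverse set upper tolerance, sum/bottleneck case):
`u_b'(I,E) = min_{l} u'(I,e_l)`. -/
theorem urv_eq_min {ι : Type*} [Fintype ι] [DecidableEq ι]
    (t : ObjType) (c : ι → ℝ) (D : Finset (Finset ι))
    (hD : D.Nonempty) (hSne : ∀ S ∈ D, S.Nonempty)
    (ht : t = ObjType.sum ∨ t = ObjType.bottleneck)
    (E : Finset ι) (hE : E.Nonempty) :
    uTolSetRev t c D E = E.inf fun e => uTol t c D e := by
  apply le_antisymm
  · -- uTolSetRev ≤ inf: for each e ∈ E, uTolSetRev ≤ uTol e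
    rw [Finset.le_inf_iff]
    intro e heE
    rcases eq_or_ne (uTol t c D e) ⊤ with htop | htop
    · rw [htop]; exact le_top
    apply ENNReal.le_of_forall_pos_le_add
    intro ε hε _
    set r := uTol t c D e with hr
    set b : ℝ := r.toReal + ε with hb
    have hb0 : (0:ℝ) ≤ b := by positivity
    have hofb : ENNReal.ofReal b = r + ε := by
      rw [hb, ENNReal.ofReal_add ENNReal.toReal_nonneg ε.coe_nonneg,
        ENNReal.ofReal_toReal htop, ENNReal.ofReal_coe_nnreal]
    have hbnot : ¬ (0 ≤ b ∧ ∀ S : Finset ι, isOpt t c D S →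
        isOpt t (fun x => if x = e then c x + b else c x) D S) := by
      intro hmem
      have : ENNReal.ofReal b ≤ r := le_sSup ⟨b, hmem, rfl⟩
      rw [hofb] at this
      have : r + (ε:ℝ≥0∞) ≤ r + 0 := by simpa using this
      have := ENNReal.add_le_add_iff_left htop |>.mp this
      simp at this
      exact absurd this (by exact_mod_cast hε.ne')
    push_neg at hbnot
    obtain ⟨S, hSopt, hSnot⟩ := hbnot hb0
    have hmem : b ∈ {a : ℝ |
        ∃ S : Finset ι, isOpt t c D S ∧
          ∃ α : ι → ℝ, (∀ x, 0 ≤ α x) ∧ (∀ x ∉ E, α x = 0) ∧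
            a = ∑ x ∈ E, α x ∧ ¬ isOpt t (fun x => c x + α x) D S} := by
      refine ⟨S, hSopt, fun x => if x = e then b else 0, ?_, ?_, ?_, ?_⟩
      · intro x; dsimp only; split_ifs <;> simp [hb0]
      · intro x hx
        dsimp only; rw [if_neg]; rintro rfl; exact hx heE
      · rw [Finset.sum_ite_eq' E e (fun _ => b), if_pos heE]
      · have hfun : (fun x => c x + if x = e then b else 0)
            = fun x => if x = e then c x + b else c x := by
          funext x; split_ifs <;> simp
        simpa [hfun] using hSnot
    calc uTolSetRev t c D E ≤ ENNReal.ofReal b := sInf_le ⟨b, hmem, rfl⟩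
      _ = r + ε := hofb
  · -- inf ≤ uTolSetRev
    apply le_sInf
    rintro v ⟨a, ⟨S, hSopt, α, hα0, hsupp, ha, hnot⟩, rfl⟩
    obtain ⟨e, heE, hkey⟩ := urv_main c D hSne ht E hSopt hα0 hsupp ha hnot
    refine le_trans (Finset.inf_le heE) ?_
    apply sSup_le
    rintro w ⟨b, ⟨hb0, hball⟩, rfl⟩
    apply ENNReal.ofReal_le_ofReal
    by_contra hc
    push_neg at hc
    exact hkey b hc.le (hball S hSopt)
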